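/- Let 0 ≠ f ∈ m ⊆ P = ℂ[[x₁,…,xₙ]] with Der_f ⊆ Δ(P). Suppose σ₁,…,σ_s ∈ Der_f and σ'₁,…,σ'_{s'} ∈ Der_f are two ℂ-linearly independent families of diagonal derivations such that: every δ ∈ Der_f whose degree-0 part commutes with A(σᵢ) for all i satisfies δ_S ∈ ⟨σ₁,…,σ_s⟩_ℂ, and every δ ∈ Der_f whose degree-0 part commutes with A(σ'ⱼ) for all j satisfies δ_S ∈ ⟨σ'₁,…,σ'_{s'}⟩_ℂ. Then s = s'. -/

import Mathlib

noncomputable section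
set_option synthInstance.maxHeartbeats 1000000
set_option maxHeartbeats 1000000

/-- The formal power series ring `P = ℂ[[x₁,…,xₙ]]`. -/
abbrev P (n : ℕ) : Type := MvPowerSeries (Fin n) ℂ

/-- The space of ℂ-linear derivations of `P`. -/
abbrev Der (n : ℕ) : Type := Derivation ℂ (P n) (P n)

/-- The maximal ideal `m = (x₁,…,xₙ)` of `P`. -/
def mIdeal (n : ℕ) : Ideal (P n) :=
  Ideal.span (Set.range (MvPowerSeries.X : Fin n → P n))

/-- The degree-0 part of a derivation: the matrix `A(δ)` whose `(i,j)` entry is the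
coefficient of `xᵢ` in `δ(xⱼ)`. -/
def matrixOf {n : ℕ} (δ : Der n) : Matrix (Fin n) (Fin n) ℂ :=
  Matrix.of fun i j => MvPowerSeries.coeff (Finsupp.single i 1) (δ (MvPowerSeries.X j))

/-- A matrix over ℂ is diagonalizable (= semisimple) if it is conjugate to a diagonal
matrix. -/
def IsDiagonalizable {n : ℕ} (S : Matrix (Fin n) (Fin n) ℂ) : Prop :=
  ∃ Q : GL (Fin n) ℂ, (((Q⁻¹ : GL (Fin n) ℂ) : Matrix (Fin n) (Fin n) ℂ) * S *
    (Q : Matrix (Fin n) (Fin n) ℂ)).IsDiag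

/-- The family `σ` of derivations is maximal among degree-0 semisimple symmetries of `f`:
every logarithmic derivation `δ ∈ Der_f` whose degree-0 part commutes with all `A(σᵢ)` has
semisimple part `δ_S` (given by the semisimple summand of the Jordan–Chevalley
decomposition `A(δ) = S + N`) in the ℂ-span of the `A(σᵢ)`. -/
def IsMaximalDiagonalFamily {n s : ℕ} (f : P n) (σ : Fin s → Der n) : Prop :=
  ∀ δ : Der n, δ f ∈ Ideal.span {f} →
    (∀ i, Commute (matrixOf δ) (matrixOf (σ i))) →
    ∀ S N : Matrix (Fin n) (Fin n) ℂ, matrixOf δ = S + N → Commute S N →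
      IsNilpotent N → IsDiagonalizable S →
      S ∈ Submodule.span ℂ (Set.range fun i => matrixOf (σ i))



/-- total degree of a multi-exponent -/
def degE {n : ℕ} (e : Fin n →₀ ℕ) : ℕ := ∑ j, e j

lemma degE_mono {n : ℕ} {a b : Fin n →₀ ℕ} (h : a ≤ b) : degE a ≤ degE b :=
  Finset.sum_le_sum fun j _ => h j

lemma degE_add {n : ℕ} (a b : Fin n →₀ ℕ) : degE (a + b) = degE a + degE b := by
  simp [degE, Finset.sum_add_distrib]

lemma degE_single {n : ℕ} (j : Fin n) : degE (Finsupp.single j 1) = 1 := by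
  simp [degE, Finsupp.single_apply]

lemma le_degE {n : ℕ} (e : Fin n →₀ ℕ) (j : Fin n) : e j ≤ degE e :=
  Finset.single_le_sum (fun i _ => Nat.zero_le _) (Finset.mem_univ j)

lemma exists_le_degE {n : ℕ} : ∀ (k : ℕ) (e : Fin n →₀ ℕ), k ≤ degE e →
    ∃ α : Fin n →₀ ℕ, α ≤ e ∧ degE α = k := by
  intro k
  induction k with
  | zero => exact fun e _ => ⟨0, zero_le, by simp [degE]⟩
  | succ k ih =>
    intro e hk
    have hpos : 0 < degE e := lt_of_lt_of_le (Nat.succ_pos k) hk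
    have : ∃ j, e j ≠ 0 := by
      by_contra hc
      push_neg at hc
      simp [degE, hc] at hpos
    obtain ⟨j, hj⟩ := this
    have hsle : Finsupp.single j 1 ≤ e := Finsupp.single_le_iff.2 (Nat.one_le_iff_ne_zero.2 hj)
    set e' := e - Finsupp.single j 1 with he'
    have hsum : e' + Finsupp.single j 1 = e := tsub_add_cancel_of_le hsle
    have hdeg : degE e' + 1 = degE e := by
      rw [← degE_single j, ← degE_add, hsum]
    have hk' : k ≤ degE e' := by omega
    obtain ⟨α, hle, hd⟩ := ih e' hk'
    refine ⟨α + Finsupp.single j 1, ?_, by rw [degE_add, hd, degE_single]⟩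
    calc α + Finsupp.single j 1 ≤ e' + Finsupp.single j 1 := add_le_add_left hle _
    _ = e := hsum

lemma der_coe_poly {n : ℕ} (δ : Der n) (h : ∀ j, δ (MvPowerSeries.X j) = 0)
    (p : MvPolynomial (Fin n) ℂ) : δ (↑p : P n) = 0 := by
  induction p using MvPolynomial.induction_on with
  | C a =>
    rw [MvPolynomial.coe_C]
    have : (MvPowerSeries.C a : P n) = algebraMap ℂ (P n) a := rfl
    rw [this, Derivation.map_algebraMap]
  | add p q hp hq => rw [MvPolynomial.coe_add, map_add, hp, hq, add_zero]
  | mul_X p j hp =>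
    rw [MvPolynomial.coe_mul, MvPolynomial.coe_X, Derivation.leibniz, hp, h j]
    simp

lemma der_monomial {n : ℕ} (δ : Der n) (h : ∀ j, δ (MvPowerSeries.X j) = 0)
    (α : Fin n →₀ ℕ) : δ (MvPowerSeries.monomial α (1:ℂ)) = 0 := by
  rw [← MvPolynomial.coe_monomial]
  exact der_coe_poly δ h _

theorem derivation_eq_zero {n : ℕ} (hn : 0 < n) (δ : Der n) (h : ∀ j, δ (MvPowerSeries.X j) = 0) :
    δ = 0 := by
  classical
  apply Derivation.ext
  intro f
  refine MvPowerSeries.ext (R := ℂ) fun d => ?_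
  rw [Derivation.coe_zero, Pi.zero_apply, map_zero]
  -- target degree
  set k : ℕ := degE d + 1 with hk
  set b : Fin n →₀ ℕ := Finsupp.equivFunOnFinite.symm (fun _ => k) with hb
  have hbapp : ∀ j, b j = k := fun j => rfl
  set r : P n := f - ↑(MvPowerSeries.trunc ℂ b f) with hr
  have htrunc : δ f = δ r := by
    rw [hr, map_sub, der_coe_poly δ h, sub_zero]
  -- r has order ≥ k
  have hord : ∀ e : Fin n →₀ ℕ, degE e < k → MvPowerSeries.coeff e r = 0 := by
    intro e he
    have helt : e < b := by
      have hle : e ≤ b := by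
        intro j
        rw [hbapp]
        exact lt_of_le_of_lt (le_degE e j) he |>.le
      refine lt_of_le_of_ne hle ?_
      intro hEq
      set j : Fin n := ⟨0, hn⟩
      have h1 : e j < k := lt_of_le_of_lt (le_degE e j) he
      rw [hEq] at h1
      rw [hbapp] at h1
      omega
    rw [hr, map_sub, MvPolynomial.coeff_coe, MvPowerSeries.coeff_trunc, if_pos helt, sub_self]
  -- choice function
  have hch : ∀ e : Fin n →₀ ℕ, k ≤ degE e → ∃ α : Fin n →₀ ℕ, α ≤ e ∧ degE α = k :=
    fun e he => exists_le_degE k e he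
  set ch : (Fin n →₀ ℕ) → (Fin n →₀ ℕ) := fun e =>
    if hh : k ≤ degE e then (hch e hh).choose else 0 with hchdef
  have hch_le : ∀ e, k ≤ degE e → ch e ≤ e := by
    intro e he; rw [hchdef]; simp only [dif_pos he]; exact (hch e he).choose_spec.1
  have hch_deg : ∀ e, k ≤ degE e → degE (ch e) = k := by
    intro e he; rw [hchdef]; simp only [dif_pos he]; exact (hch e he).choose_spec.2
  -- index set
  set A : Finset (Fin n →₀ ℕ) := (Finset.Iic b).filter (fun α => degE α = k) with hA
  have hmemA : ∀ α, α ∈ A ↔ α ≤ b ∧ degE α = k := by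
    intro α; rw [hA, Finset.mem_filter, Finset.mem_Iic]
  -- the cofactor series
  set g : (Fin n →₀ ℕ) → P n := fun α => fun e =>
    if ch (e + α) = α then MvPowerSeries.coeff (e + α) r else 0 with hg
  have hgc : ∀ α e, MvPowerSeries.coeff e (g α) =
      if ch (e + α) = α then MvPowerSeries.coeff (e + α) r else 0 := fun α e => rfl
  -- decomposition
  have hdecomp : r = ∑ α ∈ A, (MvPowerSeries.monomial α (1:ℂ)) * g α := by
    ext d'
    rw [map_sum]
    have hterm : ∀ α ∈ A, MvPowerSeries.coeff d' ((MvPowerSeries.monomial α (1:ℂ)) * g α)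
        = if α ≤ d' ∧ ch d' = α then MvPowerSeries.coeff d' r else 0 := by
      intro α _
      rw [MvPowerSeries.coeff_monomial_mul]
      by_cases hle : α ≤ d'
      · rw [if_pos hle, hgc, tsub_add_cancel_of_le hle, one_mul]
        by_cases hc : ch d' = α
        · rw [if_pos hc, if_pos ⟨hle, hc⟩]
        · rw [if_neg hc, if_neg (by tauto)]
      · rw [if_neg hle, if_neg (by tauto)]
    rw [Finset.sum_congr rfl hterm]
    by_cases hdeg : k ≤ degE d'
    · have hchA : ch d' ∈ A := by
        rw [hmemA]
        refine ⟨?_, hch_deg d' hdeg⟩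
        intro j
        rw [hbapp]
        calc ch d' j ≤ degE (ch d') := le_degE _ j
        _ = k := hch_deg d' hdeg
      have : ∀ α ∈ A, (if α ≤ d' ∧ ch d' = α then MvPowerSeries.coeff d' r else 0)
          = if α = ch d' then MvPowerSeries.coeff d' r else 0 := by
        intro α _
        congr 1
        simp only [eq_iff_iff]
        constructor
        · rintro ⟨_, hc⟩; exact hc.symm
        · rintro rfl; exact ⟨hch_le d' hdeg, rfl⟩
      rw [Finset.sum_congr rfl this, Finset.sum_ite_eq' A (ch d'), if_pos hchA]
    · push_neg at hdeg
      have hz : ∀ α ∈ A, (if α ≤ d' ∧ ch d' = α then MvPowerSeries.coeff d' r else 0) = 0 := by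
        intro α hα
        rw [if_neg]
        rintro ⟨hle, -⟩
        have := degE_mono hle
        rw [(hmemA α).1 hα |>.2] at this
        omega
      rw [Finset.sum_eq_zero hz, hord d' hdeg]
  -- conclude
  rw [htrunc, hdecomp, map_sum, map_sum]
  refine Finset.sum_eq_zero ?_
  intro α hα
  rw [Derivation.leibniz, der_monomial δ h, smul_zero, add_zero, smul_eq_mul]
  rw [MvPowerSeries.coeff_monomial_mul, if_neg]
  intro hle
  have := degE_mono hle
  rw [(hmemA α).1 hα |>.2] at this
  omega

lemma matrixOf_eq_diagonal {n : ℕ} (δ : Der n) (c : Fin n → ℂ)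
    (h : ∀ j, δ (MvPowerSeries.X j) = c j • MvPowerSeries.X j) :
    matrixOf δ = Matrix.diagonal c := by
  classical
  ext i j
  rw [matrixOf, Matrix.of_apply, h j, MvPowerSeries.coeff_smul, MvPowerSeries.coeff_X]
  rw [Matrix.diagonal_apply]
  by_cases hij : i = j
  · subst hij; simp
  · rw [if_neg hij, if_neg, mul_zero]
    intro hEq
    exact hij (Finsupp.single_left_injective one_ne_zero hEq)

lemma commute_diagonal {n : ℕ} (a b : Fin n → ℂ) :
    Commute (Matrix.diagonal a) (Matrix.diagonal b) := by
  unfold Commute SemiconjBy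
  rw [Matrix.diagonal_mul_diagonal, Matrix.diagonal_mul_diagonal,
    show (fun i => a i * b i) = fun i => b i * a i from funext fun i => mul_comm _ _]

lemma li_matrixOf {n s : ℕ} (hn : 0 < n) (σ : Fin s → Der n)
    (hdiag : ∀ i, ∃ c : Fin n → ℂ, ∀ j, σ i (MvPowerSeries.X j) = c j • MvPowerSeries.X j)
    (hli : LinearIndependent ℂ σ) :
    LinearIndependent ℂ (fun i => matrixOf (σ i)) := by
  choose c hc using hdiag
  rw [Fintype.linearIndependent_iff]
  intro a ha
  have hδ : (∑ i, a i • σ i) = 0 := by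
    apply derivation_eq_zero hn
    intro j
    have hcoe : ⇑(∑ i, a i • σ i) = ∑ i, ⇑(a i • σ i) :=
      map_sum (Derivation.coeFnAddMonoidHom) _ _
    have h1 : (∑ i, a i • σ i) (MvPowerSeries.X j) = ∑ i, (a i • σ i) (MvPowerSeries.X j) := by
      rw [hcoe, Finset.sum_apply]
    rw [h1]
    have h2 : ∀ i, (a i • σ i) (MvPowerSeries.X j) = (a i * c i j) • MvPowerSeries.X j := by
      intro i
      rw [Derivation.smul_apply, hc i j, smul_smul]
    rw [Finset.sum_congr rfl fun i _ => h2 i, ← Finset.sum_smul]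
    have h3 : ∑ i, a i * c i j = 0 := by
      have h4 := congrFun (congrFun ha j) j
      rw [Matrix.sum_apply] at h4
      have h5 : ∀ i : Fin s, (a i • matrixOf (σ i)) j j = a i * c i j := by
        intro i
        rw [matrixOf_eq_diagonal (σ i) (c i) (hc i), Matrix.smul_apply,
          Matrix.diagonal_apply_eq, smul_eq_mul]
      rw [Finset.sum_congr rfl fun i _ => h5 i] at h4
      simpa using h4
    rw [h3, zero_smul]
  exact Fintype.linearIndependent_iff.1 hli a hδ

/-- Uniqueness of the number of independent diagonal symmetries: if `σ₁,…,σ_s` and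
`σ'₁,…,σ'_{s'}` are two ℂ-linearly independent families of diagonal logarithmic derivations
along `0 ≠ f ∈ m` (with `Der_f ⊆ Δ(P)`), each maximal in the sense that any `δ ∈ Der_f`
whose degree-0 part commutes with the family has its semisimple part in the family's
ℂ-span, then `s = s'`. -/
theorem card_maximal_diagonal_family_unique {n : ℕ} (hn : 0 < n)
    (f : P n) (hf0 : f ≠ 0) (hfm : f ∈ mIdeal n)
    (hDelta : ∀ δ : Der n, δ f ∈ Ideal.span {f} → ∀ g ∈ mIdeal n, δ g ∈ mIdeal n)
    {s s' : ℕ} (σ : Fin s → Der n) (σ' : Fin s' → Der n)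
    (hσlog : ∀ i, σ i f ∈ Ideal.span {f}) (hσ'log : ∀ i, σ' i f ∈ Ideal.span {f})
    (hσdiag : ∀ i, ∃ c : Fin n → ℂ, ∀ j, σ i (MvPowerSeries.X j) = c j • MvPowerSeries.X j)
    (hσ'diag : ∀ i, ∃ c : Fin n → ℂ, ∀ j, σ' i (MvPowerSeries.X j) = c j • MvPowerSeries.X j)
    (hli : LinearIndependent ℂ σ) (hli' : LinearIndependent ℂ σ')
    (hmax : IsMaximalDiagonalFamily f σ) (hmax' : IsMaximalDiagonalFamily f σ') :
    s = s' := by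
  have key : ∀ {t t' : ℕ} (τ : Fin t → Der n) (τ' : Fin t' → Der n),
      (∀ i, τ i f ∈ Ideal.span {f}) →
      (∀ i, ∃ c : Fin n → ℂ, ∀ j, τ i (MvPowerSeries.X j) = c j • MvPowerSeries.X j) →
      (∀ i, ∃ c : Fin n → ℂ, ∀ j, τ' i (MvPowerSeries.X j) = c j • MvPowerSeries.X j) →
      IsMaximalDiagonalFamily f τ' →
      Submodule.span ℂ (Set.range fun i => matrixOf (τ i)) ≤
        Submodule.span ℂ (Set.range fun i => matrixOf (τ' i)) := by
    intro t t' τ τ' hlog hdiag hdiag' hmaximal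
    rw [Submodule.span_le]
    rintro _ ⟨i, rfl⟩
    obtain ⟨c, hc⟩ := hdiag i
    have hmat : matrixOf (τ i) = Matrix.diagonal c := matrixOf_eq_diagonal (τ i) c hc
    refine hmaximal (τ i) (hlog i) ?_ (matrixOf (τ i)) 0 (add_zero _).symm
      (Commute.zero_right _) ⟨1, by simp⟩ ?_
    · intro j
      obtain ⟨c', hc'⟩ := hdiag' j
      rw [hmat, matrixOf_eq_diagonal (τ' j) c' hc']
      exact commute_diagonal c c'
    · refine ⟨1, ?_⟩
      rw [hmat]
      simp [Matrix.isDiag_diagonal]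
  have hspan : Submodule.span ℂ (Set.range fun i => matrixOf (σ i)) =
      Submodule.span ℂ (Set.range fun i => matrixOf (σ' i)) :=
    le_antisymm (key σ σ' hσlog hσdiag hσ'diag hmax')
      (key σ' σ hσ'log hσ'diag hσdiag hmax)
  have h1 : Module.finrank ℂ
      (Submodule.span ℂ (Set.range fun i => matrixOf (σ i))) = s := by
    rw [finrank_span_eq_card (li_matrixOf hn σ hσdiag hli), Fintype.card_fin]
  have h2 : Module.finrank ℂ
      (Submodule.span ℂ (Set.range fun i => matrixOf (σ' i))) = s' := by
    rw [finrank_span_eq_card (li_matrixOf hn σ' hσ'diag hli'), Fintype.card_fin]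
  rw [← h1, ← h2, hspan]
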